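/- Let F(v) = 1 − e^{−v} be the exponential CDF, and n ≥ 2. If T_1,...,T_n > 0 satisfy T_i · ∏_{j≠i} F(T_j) = p for all i (for some p > 0), then T_1 = T_2 = ... = T_n. That is, all equilibria on the complete graph with exponential valuations are symmetric. -/

import Mathlib

lemma g_anti : StrictAntiOn (fun t : ℝ => (1 - Real.exp (-t)) / t) (Set.Ioi 0) := by
  apply strictAntiOn_of_deriv_neg (convex_Ioi 0)
  · apply ContinuousOn.div
    · exact (continuousOn_const.sub (Real.continuous_exp.comp continuous_neg).continuousOn)
    · exact continuousOn_id
    · intro x hx; exact ne_of_gt hx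
  · intro x hx
    rw [interior_Ioi] at hx
    have hx0 : (0:ℝ) < x := hx
    have h1 : HasDerivAt (fun t : ℝ => 1 - Real.exp (-t)) (Real.exp (-x)) x := by
      have := ((Real.hasDerivAt_exp (-x)).comp x (hasDerivAt_neg x)).const_sub 1
      simpa using this
    have h2 : HasDerivAt (fun t : ℝ => t) 1 x := hasDerivAt_id x
    have h : HasDerivAt (fun t : ℝ => (1 - Real.exp (-t)) / t) ((Real.exp (-x) * x - (1 - Real.exp (-x)) * 1) / x ^ 2) x := h1.div h2 (ne_of_gt hx0)
    rw [h.deriv]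
    have hexp : x + 1 < Real.exp x := Real.add_one_lt_exp (ne_of_gt hx0)
    have hne : Real.exp (-x) = (Real.exp x)⁻¹ := Real.exp_neg x
    have hpos := Real.exp_pos x
    apply div_neg_of_neg_of_pos
    · rw [hne]
      have : (Real.exp x)⁻¹ * (x + 1) < 1 := by
        rw [inv_mul_lt_iff₀ hpos]
        linarith
      nlinarith [hpos]
    · positivity

lemma key (x y : ℝ) (hx : 0 < x) (hy : 0 < y)
    (h : x * (1 - Real.exp (-y)) = y * (1 - Real.exp (-x))) : x = y := by
  have : (1 - Real.exp (-x)) / x = (1 - Real.exp (-y)) / y := by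
    field_simp
    linarith [h]
  exact g_anti.injOn hx hy this

theorem stmt_15 (F : ℝ → ℝ) (hF : ∀ v, F v = 1 - Real.exp (-v))
    (n : ℕ) (hn : 2 ≤ n) (p : ℝ) (hp : 0 < p)
    (T : Fin n → ℝ) (hTpos : ∀ i, 0 < T i)
    (heq : ∀ i, T i * ∏ j ∈ Finset.univ.erase i, F (T j) = p) :
    ∀ i j, T i = T j := by
  have hFpos : ∀ k, 0 < F (T k) := by
    intro k
    rw [hF]
    have : Real.exp (-(T k)) < 1 := Real.exp_lt_one_iff.mpr (neg_neg_iff_pos.mpr (hTpos k))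
    linarith
  have hP : ∀ i, T i * (∏ k, F (T k)) = p * F (T i) := by
    intro i
    have := heq i
    have hprod : (∏ k ∈ Finset.univ.erase i, F (T k)) * F (T i) = ∏ k, F (T k) :=
      Finset.prod_erase_mul _ _ (Finset.mem_univ i)
    calc T i * (∏ k, F (T k)) = T i * ((∏ k ∈ Finset.univ.erase i, F (T k)) * F (T i)) := by
          rw [hprod]
      _ = (T i * ∏ k ∈ Finset.univ.erase i, F (T k)) * F (T i) := by ring
      _ = p * F (T i) := by rw [this]
  intro i j
  have hPpos : 0 < ∏ k, F (T k) := Finset.prod_pos (fun k _ => hFpos k)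
  have hi := hP i
  have hj := hP j
  have hmain : T i * F (T j) = T j * F (T i) := by
    have h1 : T i * F (T j) * (∏ k, F (T k)) = T j * F (T i) * (∏ k, F (T k)) := by
      calc T i * F (T j) * (∏ k, F (T k)) = (T i * (∏ k, F (T k))) * F (T j) := by ring
        _ = p * F (T i) * F (T j) := by rw [hi]
        _ = (T j * (∏ k, F (T k))) * F (T i) := by rw [hj]; ring
        _ = T j * F (T i) * (∏ k, F (T k)) := by ring
    exact mul_right_cancel₀ (ne_of_gt hPpos) h1
  rw [hF, hF] at hmain
  exact key _ _ (hTpos i) (hTpos j) hmain
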